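/- Let Z be an integrable real random variable whose law has no atoms, i.e. P[Z = z₀] = 0 for every z₀ ∈ ℝ. For x ≤ 0 define ψ⁻ₓ(y) := −max{x, min{y, 0}} and E(x) := E[ψ⁻ₓ(x + Z)]. Then E is differentiable at every x < 0 with E'(x) = −P[Z ≤ −x]. -/

import Mathlib

open MeasureTheory ProbabilityTheory

private lemma psi_deriv_aux (x z : ℝ) (hx : x < 0) (hz : z ≠ -x) :
    HasDerivAt (fun y : ℝ => -(max y (min (y + z) 0)))
      (if z ≤ -x then (-1 : ℝ) else 0) x := by
  rcases lt_or_gt_of_ne hz with h | h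
  · -- z < -x, i.e. x + z < 0 : derivative -1
    rw [if_pos h.le]
    have hder : HasDerivAt (fun y : ℝ => -(y + max 0 z)) (-1 : ℝ) x := by
      exact ((hasDerivAt_id' x).add_const (max 0 z)).neg
    apply hder.congr_of_eventuallyEq
    filter_upwards [Iio_mem_nhds hx, Iio_mem_nhds (show x < -z by linarith)] with y h1 h2
    have hyz : y + z < 0 := by linarith [Set.mem_Iio.mp h2]
    rw [min_eq_left hyz.le]
    have : max y (y + z) = y + max 0 z := by
      simpa using (max_add_add_left y 0 z)
    rw [this]
  · -- z > -x, i.e. x + z > 0 : derivative 0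
    rw [if_neg (by linarith)]
    have hder : HasDerivAt (fun _ : ℝ => (0 : ℝ)) (0 : ℝ) x := hasDerivAt_const x 0
    apply hder.congr_of_eventuallyEq
    filter_upwards [Iio_mem_nhds hx, Ioi_mem_nhds (show -z < x by linarith)] with y h1 h2
    have hy : y < 0 := Set.mem_Iio.mp h1
    have hyz : 0 < y + z := by have := Set.mem_Ioi.mp h2; linarith
    rw [min_eq_right hyz.le, max_eq_right hy.le, neg_zero]

/-- **Differentiability of `E(x) = E[ψ⁻ₓ(x+Z)]`** (from the proof of Lemma `LemVarDen`):
for an integrable random variable `Z` with atomless law, the function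
`x ↦ E[−max{x, min{x+Z, 0}}]` is differentiable at every `x < 0` with derivative
`−P[Z ≤ −x]`. -/
theorem deriv_E_minus
    {Ω : Type*} [MeasurableSpace Ω] (P : Measure Ω) [IsProbabilityMeasure P]
    (Z : Ω → ℝ) (hZm : Measurable Z) (hZ : Integrable Z P)
    (hatomless : ∀ z₀ : ℝ, P {ω | Z ω = z₀} = 0) :
    ∀ x : ℝ, x < 0 →
      HasDerivAt (fun x : ℝ => ∫ ω, -(max x (min (x + Z ω) 0)) ∂P)
        (-(P {ω | Z ω ≤ -x}).toReal) x := by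
  intro x hx
  set s : Set Ω := {ω | Z ω ≤ -x} with hs_def
  have hs : MeasurableSet s := hZm measurableSet_Iic
  set F' : Ω → ℝ := fun ω => if Z ω ≤ -x then (-1 : ℝ) else 0 with hF'_def
  have hmeas : ∀ y : ℝ, AEStronglyMeasurable (fun ω => -(max y (min (y + Z ω) 0))) P := by
    intro y
    exact (measurable_const.max ((measurable_const.add hZm).min measurable_const)).neg.aestronglyMeasurable
  have key := hasDerivAt_integral_of_dominated_loc_of_lip (μ := P)
      (F := fun y ω => -(max y (min (y + Z ω) 0))) (F' := F') (x₀ := x)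
      (bound := fun _ => (1 : ℝ)) (s := Metric.ball x 1) (Metric.ball_mem_nhds x one_pos)
      (Filter.Eventually.of_forall fun y => hmeas y)
      ?_ ?_ ?_ (integrable_const 1) ?_
  · obtain ⟨hint, hder⟩ := key
    have hFi : ∫ ω, F' ω ∂P = -(P s).toReal := by
      have : F' = s.indicator (fun _ => (-1 : ℝ)) := by
        funext ω
        simp [hF'_def, Set.indicator_apply, hs_def, Set.mem_setOf_eq]
      rw [this, integral_indicator_const _ hs]
      simp [Measure.real]
    rwa [hFi] at hder
  · -- integrability of F x
    apply (Integrable.mono' (integrable_const (-x)) (hmeas x))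
    filter_upwards with ω
    have h1 : x ≤ max x (min (x + Z ω) 0) := le_max_left _ _
    have h2 : max x (min (x + Z ω) 0) ≤ 0 := max_le hx.le (min_le_right _ _)
    rw [Real.norm_eq_abs, abs_neg, abs_le]
    constructor <;> linarith
  · -- F' measurable
    apply Measurable.aestronglyMeasurable
    exact Measurable.ite (hZm measurableSet_Iic) measurable_const measurable_const
  · -- Lipschitz
    filter_upwards with ω
    have hL : LipschitzWith 1 (fun y : ℝ => -(max y (min (y + Z ω) 0))) := by
      apply LipschitzWith.neg
      have hadd : LipschitzWith 1 (fun y : ℝ => y + Z ω) :=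
        LipschitzWith.of_dist_le_mul fun a b => by rw [dist_add_right]; simp
      simpa using LipschitzWith.max LipschitzWith.id
        (LipschitzWith.min hadd ((LipschitzWith.const (0 : ℝ)).weaken zero_le_one))
    have : (Real.nnabs (1 : ℝ)) = 1 := by
      ext; simp
    rw [this]
    exact hL.lipschitzOnWith
  · -- a.e. differentiability
    have h0 : ∀ᵐ ω ∂P, Z ω ≠ -x := by
      rw [ae_iff]
      simpa using hatomless (-x)
    filter_upwards [h0] with ω hω
    exact psi_deriv_aux x (Z ω) hx hω
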